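/- Let k be an algebraically closed field, A a finitely generated commutative k-algebra, X = Spec A, and U ⊆ X an open subset. Let Λ be the set of maximal ideals of A contained in U, for m ∈ Λ let Â_m denote the m-adic completion of A, let P = ∏_{m ∈ Λ} Â_m, let a : A → P be the diagonal map induced by the canonical maps A → Â_m, and let j : O_X(U) → P be the map sending a section to the family of images of its germs in the completions. Then j is injective, and its image is exactly the set of x ∈ P such that there exists an ideal I ⊆ A with: (i) I ⊄ m for every m ∈ Λ, and (ii) a(f)·x ∈ a(A) for every f ∈ I. (That is, O_X(U) is isomorphic to the Gabriel-style localization A_{T(U)} inside the product of completed local rings at the closed points of U.) -/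

import Mathlib

open AlgebraicGeometry CategoryTheory Opposite TopologicalSpace

universe u

section GabrielAux

variable {A : Type u} [CommRing A]

lemma gabriel_exists_basicOpen (U : Opens (PrimeSpectrum A)) {p : PrimeSpectrum A}
    (hp : p ∈ U) : ∃ g : A, p ∈ PrimeSpectrum.basicOpen g ∧
      (PrimeSpectrum.basicOpen g : Set (PrimeSpectrum A)) ⊆ U := by
  obtain ⟨v, ⟨g, rfl⟩, hpv, hvU⟩ :=
    PrimeSpectrum.isTopologicalBasis_basic_opens.exists_subset_of_mem_open hp U.2
  exact ⟨g, hpv, hvU⟩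

lemma gabriel_exists_maximal [IsJacobsonRing A] {p : Ideal A} (hp : p.IsPrime) {g : A}
    (hg : g ∉ p) : ∃ m : Ideal A, m.IsMaximal ∧ p ≤ m ∧ g ∉ m := by
  by_contra hcon
  push_neg at hcon
  have hmem : g ∈ p.jacobson := by
    rw [Ideal.jacobson, Ideal.mem_sInf]
    rintro J ⟨hpJ, hJ⟩
    exact hcon J hJ hpJ
  rw [IsJacobsonRing.out ‹IsJacobsonRing A› hp.isRadical] at hmem
  exact hg hmem

lemma gabriel_exists_maximal_mem [IsJacobsonRing A] (U : Opens (PrimeSpectrum A))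
    {q : PrimeSpectrum A} (hq : q ∈ U) :
    ∃ m : PrimeSpectrum A, m.asIdeal.IsMaximal ∧ m ∈ U ∧ q.asIdeal ≤ m.asIdeal := by
  obtain ⟨g, hqg, hgU⟩ := gabriel_exists_basicOpen U hq
  obtain ⟨m, hm, hqm, hgm⟩ := gabriel_exists_maximal q.2 (by simpa using hqg)
  exact ⟨⟨m, hm.isPrime⟩, hm, hgU (by simpa using hgm), hqm⟩

lemma gabriel_krull [IsNoetherianRing A] {m : Ideal A} (hm : m.IsMaximal) {t : A}
    (ht : ∀ n : ℕ, t ∈ m ^ n) :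
    algebraMap A (Localization.AtPrime m) t = 0 := by
  haveI := hm.isPrime
  haveI : IsNoetherianRing (Localization.AtPrime m) :=
    IsLocalization.isNoetherianRing m.primeCompl _ ‹IsNoetherianRing A›
  haveI : m.IsMaximal := hm
  have hne : Ideal.map (algebraMap A (Localization.AtPrime m)) m ≠ ⊤ := by
    rw [Localization.AtPrime.map_eq_maximalIdeal]
    exact (IsLocalRing.maximalIdeal.isMaximal _).ne_top
  have hbot := Ideal.iInf_pow_eq_bot_of_isLocalRing
    (Ideal.map (algebraMap A (Localization.AtPrime m)) m) hne
  have hmem : algebraMap A (Localization.AtPrime m) t ∈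
      ⨅ n : ℕ, Ideal.map (algebraMap A (Localization.AtPrime m)) m ^ n := by
    rw [Ideal.mem_iInf]
    intro n
    rw [← Ideal.map_pow]
    exact Ideal.mem_map_of_mem _ (ht n)
  rw [hbot] at hmem
  simpa using hmem

lemma gabriel_adic_zero_iff {I : Ideal A} {t : A} :
    algebraMap A (AdicCompletion I A) t = 0 ↔ ∀ n : ℕ, t ∈ I ^ n := by
  have hsmul : ∀ n : ℕ, (I ^ n • ⊤ : Ideal A) = I ^ n := fun n => by ext x; simp
  constructor
  · intro h n
    have h0 : (algebraMap A (AdicCompletion I A) t).val n = 0 := by rw [h]; rfl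
    have h1 : Ideal.Quotient.mk (I ^ n • ⊤ : Ideal A) t = 0 := h0
    rw [Ideal.Quotient.eq_zero_iff_mem, hsmul n] at h1
    exact h1
  · intro h
    apply Subtype.ext
    funext n
    show Ideal.Quotient.mk (I ^ n • ⊤ : Ideal A) t = 0
    rw [Ideal.Quotient.eq_zero_iff_mem, hsmul n]
    exact h n

end GabrielAux

noncomputable abbrev gabriel_otl (A : Type u) [CommRing A] (U : Opens (PrimeSpectrum A)) (x : PrimeSpectrum A)
    (hx : x ∈ U) (s : (Spec.structureSheaf A).1.obj (op U)) : Localization.AtPrime x.asIdeal :=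
  IsLocalization.algEquiv x.asIdeal.primeCompl
    ((Spec.structureSheaf A).presheaf.stalk x) (Localization.AtPrime x.asIdeal)
    (((Spec.structureSheaf A).presheaf.germ U x hx).hom s)

lemma gabriel_ext (A : Type u) [CommRing A] (U : Opens (PrimeSpectrum A))
    {s t : (Spec.structureSheaf A).1.obj (op U)}
    (h : ∀ q : ↥U, gabriel_otl A U q.1 q.2 s = gabriel_otl A U q.1 q.2 t) : s = t := by
  apply TopCat.Presheaf.section_ext (Spec.structureSheaf A) U s t
  intro (x : PrimeSpectrum A) hx
  exact (IsLocalization.algEquiv x.asIdeal.primeCompl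
    ((Spec.structureSheaf A).presheaf.stalk x) (Localization.AtPrime x.asIdeal)).injective
    (h ⟨x, hx⟩)

lemma gabriel_mk' (A : Type u) [CommRing A] (U : Opens (PrimeSpectrum A)) (x : PrimeSpectrum A)
    (hx : x ∈ U) (s : (Spec.structureSheaf A).1.obj (op U)) (r g : A) (hg : g ∉ x.asIdeal)
    (V : Opens (PrimeSpectrum A)) (hxV : x ∈ V) (hVU : V ≤ U)
    (h : ∀ y : V, ∀ hy : y.1 ∈ PrimeSpectrum.basicOpen g,
      s.1 ⟨y.1, hVU y.2⟩ = LocalizedModule.mk r ⟨g, hy⟩) :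
    gabriel_otl A U x hx s =
      IsLocalization.mk' (Localization.AtPrime x.asIdeal) r (⟨g, hg⟩ : x.asIdeal.primeCompl) := by
  let W : Opens (PrimeSpectrum A) := V ⊓ PrimeSpectrum.basicOpen g
  have hxW : x ∈ W := ⟨hxV, hg⟩
  have hWU : W ≤ U := inf_le_left.trans hVU
  have hres : (Spec.structureSheaf A).1.map (homOfLE hWU).op s =
      StructureSheaf.const r g W inf_le_right := by
    apply Subtype.ext; funext y; exact h ⟨y.1, y.2.1⟩ y.2.2
  have hmul : StructureSheaf.const r g W inf_le_right * algebraMap A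
      ((structureSheafInType A A).obj.obj (op W)) g = algebraMap A _ r := by
    apply Subtype.ext; funext (y : ↥W)
    show (LocalizedModule.mk r _ : LocalizedModule y.1.asIdeal.primeCompl A) *
      algebraMap A (LocalizedModule y.1.asIdeal.primeCompl A) g =
      algebraMap A (LocalizedModule y.1.asIdeal.primeCompl A) r
    rw [Algebra.algebraMap_eq_smul_one, Algebra.algebraMap_eq_smul_one, OreLocalization.one_def,
      LocalizedModule.smul'_mk, LocalizedModule.smul'_mk]
    erw [LocalizedModule.mk_mul_mk]
    rw [LocalizedModule.mk_eq]
    refine ⟨1, ?_⟩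
    simp [Submonoid.smul_def]
    ring
  have hst : ((Spec.structureSheaf A).presheaf.germ U x hx).hom s *
      algebraMap A ((Spec.structureSheaf A).presheaf.stalk x) g =
      algebraMap A ((Spec.structureSheaf A).presheaf.stalk x) r := by
    rw [← (Spec.structureSheaf A).presheaf.germ_res_apply (homOfLE hWU) x hxW s]
    erw [hres, StructureSheaf.stalkAlgebra_map, StructureSheaf.stalkAlgebra_map,
      ← StructureSheaf.algebraMap_germ_apply W x hxW, ← StructureSheaf.algebraMap_germ_apply W x hxW,
      ← map_mul]
    erw [hmul]
    rfl
  rw [IsLocalization.eq_mk'_iff_mul_eq]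
  have := congrArg (IsLocalization.algEquiv x.asIdeal.primeCompl
    ((Spec.structureSheaf A).presheaf.stalk x) (Localization.AtPrime x.asIdeal)) hst
  rwa [map_mul, AlgEquiv.commutes, AlgEquiv.commutes] at this

lemma gabriel_frac (A : Type u) [CommRing A] (U : Opens (PrimeSpectrum A))
    (s : (Spec.structureSheaf A).1.obj (op U)) (q : ↥U) :
    ∃ V : Opens (PrimeSpectrum A), ∃ _ : q.1 ∈ V, ∃ i : V ⟶ U, ∃ r g : A, ∀ y : ↥V,
      g ∉ y.1.asIdeal ∧ gabriel_otl A U y.1 (leOfHom i y.2) s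
        * algebraMap A (Localization.AtPrime y.1.asIdeal) g
        = algebraMap A (Localization.AtPrime y.1.asIdeal) r := by
  obtain ⟨V, hqV, i, r, g, hfrac⟩ := s.2 q
  refine ⟨V, hqV, i, r, g, fun y => ⟨(hfrac y).1, ?_⟩⟩
  rw [gabriel_mk' A U y.1 (leOfHom i y.2) s r g (hfrac y).1 V y.2 (leOfHom i)
    (fun z hz => (hfrac z).2), IsLocalization.mk'_spec]

theorem sections_iso_gabriel_localization {k : Type u} [Field k] [IsAlgClosed k]
    (A : Type u) [CommRing A] [Algebra k A] [Algebra.FiniteType k A]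
    (U : Opens (PrimeSpectrum A))
    (c : ∀ p : {p : PrimeSpectrum A // p.asIdeal.IsMaximal ∧ p ∈ U},
      Localization.AtPrime p.1.asIdeal →+* AdicCompletion p.1.asIdeal A)
    (hc : ∀ p, (c p).comp (algebraMap A (Localization.AtPrime p.1.asIdeal)) =
      algebraMap A (AdicCompletion p.1.asIdeal A)) :
    letI Λ := {p : PrimeSpectrum A // p.asIdeal.IsMaximal ∧ p ∈ U}
    letI P := ∀ p : Λ, AdicCompletion p.1.asIdeal A
    letI a : A →+* P := Pi.ringHom fun p => algebraMap A (AdicCompletion p.1.asIdeal A)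
    letI j : (Spec.structureSheaf A).1.obj (op U) → P :=
      fun s p => c p (IsLocalization.algEquiv p.1.asIdeal.primeCompl
        ((Spec.structureSheaf A).presheaf.stalk p.1) (Localization.AtPrime p.1.asIdeal)
        (((Spec.structureSheaf A).presheaf.germ U p.1 p.2.2).hom s))
    Function.Injective j ∧
      Set.range j = {x : P | ∃ I : Ideal A, (∀ p : Λ, ¬ I ≤ p.1.asIdeal) ∧
        ∀ f ∈ I, a f * x ∈ Set.range a} := by
  classical
  haveI : IsNoetherianRing A := Algebra.FiniteType.isNoetherianRing k A
  haveI : IsJacobsonRing A := isJacobsonRing_of_finiteType (A := k) (B := A)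
  -- injectivity of each `c p`
  have cinj : ∀ p : {p : PrimeSpectrum A // p.asIdeal.IsMaximal ∧ p ∈ U},
      Function.Injective (c p) := by
    intro p
    rw [injective_iff_map_eq_zero]
    intro z hz
    obtain ⟨⟨r, u⟩, rfl⟩ := IsLocalization.mk'_surjective p.1.asIdeal.primeCompl z
    dsimp only at hz ⊢
    rw [IsLocalization.mk'_eq_zero_iff]
    have h1 : algebraMap A (AdicCompletion p.1.asIdeal A) r = 0 := by
      have h2 := congrArg
        (fun w => w * c p (algebraMap A (Localization.AtPrime p.1.asIdeal) (u : A))) hz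
      simp only [zero_mul] at h2
      rw [← map_mul, IsLocalization.mk'_spec, ← RingHom.comp_apply, hc p] at h2
      exact h2
    exact (IsLocalization.map_eq_zero_iff p.1.asIdeal.primeCompl
      (Localization.AtPrime p.1.asIdeal) r).mp
      (gabriel_krull p.2.1 (gabriel_adic_zero_iff.mp h1))
  -- the kernel of the diagonal map is killed in every localization at a point of U
  have kera : ∀ t : A,
      (∀ p : {p : PrimeSpectrum A // p.asIdeal.IsMaximal ∧ p ∈ U},
        algebraMap A (AdicCompletion p.1.asIdeal A) t = 0) →
      ∀ q : ↥U, algebraMap A (Localization.AtPrime q.1.asIdeal) t = 0 := by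
    intro t ht q
    obtain ⟨m, hmmax, hmU, hqm⟩ := gabriel_exists_maximal_mem U q.2
    have h1 := gabriel_krull hmmax (gabriel_adic_zero_iff.mp (ht ⟨m, hmmax, hmU⟩))
    obtain ⟨u, hu⟩ := (IsLocalization.map_eq_zero_iff m.asIdeal.primeCompl
      (Localization.AtPrime m.asIdeal) t).mp h1
    exact (IsLocalization.map_eq_zero_iff q.1.asIdeal.primeCompl
      (Localization.AtPrime q.1.asIdeal) t).mpr
      ⟨⟨(u : A), fun hmem => u.2 (hqm hmem)⟩, hu⟩
  -- every section can be multiplied into the image of `A`, avoiding any given maximal point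
  have extend : ∀ (s : (Spec.structureSheaf A).1.obj (op U))
      (p : {p : PrimeSpectrum A // p.asIdeal.IsMaximal ∧ p ∈ U}),
      ∃ f b : A, f ∉ p.1.asIdeal ∧
        ∀ q : ↥U, gabriel_otl A U q.1 q.2 s
          * algebraMap A (Localization.AtPrime q.1.asIdeal) f
          = algebraMap A (Localization.AtPrime q.1.asIdeal) b := by
    intro s p
    have hdata : ∀ q : ↥U, ∃ h g r : A, q.1 ∈ PrimeSpectrum.basicOpen h ∧
        (∀ y : PrimeSpectrum A, y ∈ PrimeSpectrum.basicOpen h → y ∈ U) ∧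
        ∀ y : ↥U, y.1 ∈ PrimeSpectrum.basicOpen h →
          g ∉ y.1.asIdeal ∧
          gabriel_otl A U y.1 y.2 s
            * algebraMap A (Localization.AtPrime y.1.asIdeal) g
            = algebraMap A (Localization.AtPrime y.1.asIdeal) r := by
      intro q
      obtain ⟨V, hqV, i, r, g, hfrac⟩ := gabriel_frac A U s q
      obtain ⟨h, hqh, hhV⟩ := gabriel_exists_basicOpen V hqV
      refine ⟨h, g, r, hqh, fun y hy => leOfHom i (hhV hy), fun y hy => ?_⟩
      have hyy := hfrac ⟨y.1, hhV hy⟩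
      exact ⟨hyy.1, hyy.2⟩
    choose hh gg rr hmem hsub hfrac using hdata
    have hcpt : IsCompact (U : Set (PrimeSpectrum A)) := NoetherianSpace.isCompact _
    obtain ⟨tf, htf⟩ := hcpt.elim_finite_subcover
      (fun q : ↥U => (PrimeSpectrum.basicOpen (hh q) : Set (PrimeSpectrum A)))
      (fun q => (PrimeSpectrum.basicOpen (hh q)).isOpen)
      (fun z hz => Set.mem_iUnion.mpr ⟨⟨z, hz⟩, hmem ⟨z, hz⟩⟩)
    set p0 : ↥U := ⟨p.1, p.2.2⟩ with hp0def
    have hexp : ∀ q : ↥U, ∃ n : ℕ,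
        (hh p0 * hh q) ^ n * (gg q * rr p0 - gg p0 * rr q) = 0 := by
      intro q
      have hrad : hh p0 * hh q ∈
          ((Submodule.span A {gg q * rr p0 - gg p0 * rr q}).annihilator).radical := by
        rw [← PrimeSpectrum.vanishingIdeal_zeroLocus_eq_radical,
          PrimeSpectrum.mem_vanishingIdeal]
        intro y hy
        rw [PrimeSpectrum.mem_zeroLocus] at hy
        by_contra hnot
        have hyp0 : y ∈ PrimeSpectrum.basicOpen (hh p0) := by
          rw [PrimeSpectrum.mem_basicOpen]
          exact fun hin => hnot (Ideal.mul_mem_right _ _ hin)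
        have hyq : y ∈ PrimeSpectrum.basicOpen (hh q) := by
          rw [PrimeSpectrum.mem_basicOpen]
          exact fun hin => hnot (Ideal.mul_mem_left _ _ hin)
        have hyU : y ∈ U := hsub p0 y hyp0
        have h1 := hfrac p0 ⟨y, hyU⟩ hyp0
        have h2 := hfrac q ⟨y, hyU⟩ hyq
        have e0 : algebraMap A (Localization.AtPrime y.asIdeal)
            (gg q * rr p0 - gg p0 * rr q) = 0 := by
          rw [map_sub, map_mul, map_mul, ← h1.2, ← h2.2]
          ring
        obtain ⟨u, hu⟩ := (IsLocalization.map_eq_zero_iff y.asIdeal.primeCompl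
          (Localization.AtPrime y.asIdeal) _).mp e0
        refine u.2 (hy ?_)
        rw [SetLike.mem_coe, Submodule.mem_annihilator_span_singleton, smul_eq_mul]
        exact hu
      rw [Ideal.mem_radical_iff] at hrad
      obtain ⟨n, hn⟩ := hrad
      rw [Submodule.mem_annihilator_span_singleton, smul_eq_mul] at hn
      exact ⟨n, hn⟩
    choose nn hnn using hexp
    set tt : Finset ↥U := insert p0 tf with httdef
    set N : ℕ := (tt.sup nn) + 1 with hNdef
    refine ⟨gg p0 * hh p0 ^ N, rr p0 * hh p0 ^ N, ?_, ?_⟩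
    · have h1 : hh p0 ∉ p.1.asIdeal := hmem p0
      have h2 : gg p0 ∉ p.1.asIdeal := (hfrac p0 p0 (hmem p0)).1
      intro hcon
      rcases p.1.isPrime.mem_or_mem hcon with h | h
      · exact h2 h
      · exact h1 (p.1.isPrime.mem_of_pow_mem _ h)
    · intro q'
      obtain ⟨q, hqt, hq'⟩ := Set.mem_iUnion₂.mp (htf q'.2)
      have hqtt : q ∈ tt := Finset.mem_insert_of_mem hqt
      have hq'b : q'.1 ∈ PrimeSpectrum.basicOpen (hh q) := hq'
      have hfr := hfrac q q' hq'b
      have hhq : hh q ∉ q'.1.asIdeal := PrimeSpectrum.mem_basicOpen _ _ |>.mp hq'b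
      have hNq : nn q ≤ N := le_trans (Finset.le_sup hqtt) (Nat.le_succ _)
      have hA : gg q * rr p0 * (hh p0 ^ N * hh q ^ N)
          = gg p0 * rr q * (hh p0 ^ N * hh q ^ N) := by
        have h1 : (hh p0 * hh q) ^ (N - nn q)
            * ((hh p0 * hh q) ^ (nn q) * (gg q * rr p0 - gg p0 * rr q)) = 0 := by
          rw [hnn q, mul_zero]
        rw [← mul_assoc, ← pow_add, Nat.sub_add_cancel hNq] at h1
        linear_combination h1
      have hup : (gg q * hh q ^ N) ∈ q'.1.asIdeal.primeCompl := by
        intro hcon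
        rcases q'.1.isPrime.mem_or_mem hcon with h | h
        · exact hfr.1 h
        · exact hhq (q'.1.isPrime.mem_of_pow_mem _ h)
      have hu : IsUnit (algebraMap A (Localization.AtPrime q'.1.asIdeal) (gg q * hh q ^ N)) :=
        IsLocalization.map_units (Localization.AtPrime q'.1.asIdeal) ⟨_, hup⟩
      apply hu.mul_left_cancel
      have hA' := congrArg (algebraMap A (Localization.AtPrime q'.1.asIdeal)) hA
      simp only [map_mul] at hA' ⊢
      linear_combination (algebraMap A (Localization.AtPrime q'.1.asIdeal) (hh q ^ N)
        * algebraMap A (Localization.AtPrime q'.1.asIdeal) (gg p0)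
        * algebraMap A (Localization.AtPrime q'.1.asIdeal) (hh p0 ^ N)) * hfr.2 - hA'
  refine ⟨?_, ?_⟩
  · intro s t hst
    have hmaxeq : ∀ pm : {p : PrimeSpectrum A // p.asIdeal.IsMaximal ∧ p ∈ U},
        gabriel_otl A U pm.1 pm.2.2 s
          = gabriel_otl A U pm.1 pm.2.2 t :=
      fun pm => cinj pm (congrFun hst pm)
    apply gabriel_ext A U
    intro q
    obtain ⟨Vs, hqVs, is, rs, fs, hfs⟩ := gabriel_frac A U s q
    obtain ⟨Vt, hqVt, it, rt, ft, hft⟩ := gabriel_frac A U t q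
    obtain ⟨m, hmmax, hmV, hqm⟩ := gabriel_exists_maximal_mem (Vs ⊓ Vt) ⟨hqVs, hqVt⟩
    have hmU : m ∈ U := leOfHom is hmV.1
    have hs_m := hfs ⟨m, hmV.1⟩
    have ht_m := hft ⟨m, hmV.2⟩
    have e1 : gabriel_otl A U m hmU s
        * algebraMap A (Localization.AtPrime m.asIdeal) fs
        = algebraMap A (Localization.AtPrime m.asIdeal) rs := hs_m.2
    have e2 : gabriel_otl A U m hmU t
        * algebraMap A (Localization.AtPrime m.asIdeal) ft
        = algebraMap A (Localization.AtPrime m.asIdeal) rt := ht_m.2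
    have e5 : gabriel_otl A U m hmU s
        = gabriel_otl A U m hmU t := hmaxeq ⟨m, hmmax, hmU⟩
    have e3 : algebraMap A (Localization.AtPrime m.asIdeal) (rs * ft)
        = algebraMap A (Localization.AtPrime m.asIdeal) (rt * fs) := by
      rw [map_mul, map_mul, ← e1, ← e2, e5]
      ring
    obtain ⟨u, hu⟩ := (IsLocalization.eq_iff_exists m.asIdeal.primeCompl
      (Localization.AtPrime m.asIdeal)).mp e3
    have e4 : algebraMap A (Localization.AtPrime q.1.asIdeal) (rs * ft)
        = algebraMap A (Localization.AtPrime q.1.asIdeal) (rt * fs) :=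
      (IsLocalization.eq_iff_exists q.1.asIdeal.primeCompl
        (Localization.AtPrime q.1.asIdeal)).mpr
        ⟨⟨(u : A), fun hin => u.2 (hqm hin)⟩, hu⟩
    have hq_s := hfs ⟨q.1, hqVs⟩
    have hq_t := hft ⟨q.1, hqVt⟩
    have f1 : gabriel_otl A U q.1 q.2 s
        * algebraMap A (Localization.AtPrime q.1.asIdeal) fs
        = algebraMap A (Localization.AtPrime q.1.asIdeal) rs := hq_s.2
    have f2 : gabriel_otl A U q.1 q.2 t
        * algebraMap A (Localization.AtPrime q.1.asIdeal) ft
        = algebraMap A (Localization.AtPrime q.1.asIdeal) rt := hq_t.2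
    have hfs_q : fs ∉ q.1.asIdeal := hq_s.1
    have hft_q : ft ∉ q.1.asIdeal := hq_t.1
    have hu2 : IsUnit (algebraMap A (Localization.AtPrime q.1.asIdeal) (fs * ft)) :=
      IsLocalization.map_units (Localization.AtPrime q.1.asIdeal)
        (⟨fs * ft, Submonoid.mul_mem _ hfs_q hft_q⟩ : q.1.asIdeal.primeCompl)
    show gabriel_otl A U q.1 q.2 s
        = gabriel_otl A U q.1 q.2 t
    apply hu2.mul_left_cancel
    simp only [map_mul] at e4 ⊢
    linear_combination algebraMap A (Localization.AtPrime q.1.asIdeal) ft * f1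
      - algebraMap A (Localization.AtPrime q.1.asIdeal) fs * f2 + e4
  · apply Set.Subset.antisymm
    · rintro _ ⟨s, rfl⟩
      refine ⟨{
        carrier := {f | ∃ b : A, ∀ q : ↥U,
          gabriel_otl A U q.1 q.2 s
            * algebraMap A (Localization.AtPrime q.1.asIdeal) f
            = algebraMap A (Localization.AtPrime q.1.asIdeal) b}
        add_mem' := by
          rintro f f' ⟨b, hb⟩ ⟨b', hb'⟩
          exact ⟨b + b', fun q => by rw [map_add, mul_add, hb q, hb' q, map_add]⟩
        zero_mem' := ⟨0, fun q => by rw [map_zero, mul_zero]⟩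
        smul_mem' := by
          rintro r f ⟨b, hb⟩
          refine ⟨r * b, fun q => ?_⟩
          rw [smul_eq_mul]
          simp only [map_mul]
          linear_combination algebraMap A (Localization.AtPrime q.1.asIdeal) r * hb q },
        fun p hle => ?_, ?_⟩
      · obtain ⟨f, b, hfp, hfb⟩ := extend s p
        exact hfp (hle ⟨b, hfb⟩)
      · rintro f ⟨b, hb⟩
        refine ⟨b, ?_⟩
        funext p
        show algebraMap A (AdicCompletion p.1.asIdeal A) b
          = algebraMap A (AdicCompletion p.1.asIdeal A) f
            * c p (gabriel_otl A U p.1 p.2.2 s)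
        have h1 : algebraMap A (AdicCompletion p.1.asIdeal A) f
            = c p (algebraMap A (Localization.AtPrime p.1.asIdeal) f) := by
          rw [← hc p]; rfl
        rw [h1, ← map_mul, mul_comm, hb ⟨p.1, p.2.2⟩, ← RingHom.comp_apply, hc p]
    · rintro x ⟨I, hI1, hI2⟩
      have hf : ∀ q : ↥U, ∃ f : A, f ∈ I ∧ f ∉ q.1.asIdeal := by
        intro q
        by_contra hcon
        push_neg at hcon
        obtain ⟨m, hmmax, hmU, hqm⟩ := gabriel_exists_maximal_mem U q.2
        exact hI1 ⟨m, hmmax, hmU⟩ fun z hz => hqm (hcon z hz)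
      choose ff hffI hffq using hf
      have hbb' : ∀ q : ↥U, ∃ b : A,
          ∀ p : {p : PrimeSpectrum A // p.asIdeal.IsMaximal ∧ p ∈ U},
          algebraMap A (AdicCompletion p.1.asIdeal A) b
            = algebraMap A (AdicCompletion p.1.asIdeal A) (ff q) * x p := by
        intro q
        obtain ⟨b, hb⟩ := hI2 (ff q) (hffI q)
        exact ⟨b, fun p => congrFun hb p⟩
      choose bb hbb using hbb'
      have hcons : ∀ q q' : ↥U,
          algebraMap A (Localization.AtPrime q.1.asIdeal) (ff q' * bb q)
            = algebraMap A (Localization.AtPrime q.1.asIdeal) (ff q * bb q') := by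
        intro q q'
        have hker : ∀ p : {p : PrimeSpectrum A // p.asIdeal.IsMaximal ∧ p ∈ U},
            algebraMap A (AdicCompletion p.1.asIdeal A)
              (ff q' * bb q - ff q * bb q') = 0 := by
          intro p
          rw [map_sub, map_mul, map_mul, hbb q p, hbb q' p]
          ring
        have hzero := kera _ hker q
        rw [map_sub, sub_eq_zero] at hzero
        exact hzero
      have hloc : ∀ (q y : ↥U) (hy : y.1 ∈ PrimeSpectrum.basicOpen (ff q)),
          (LocalizedModule.mk (bb y) ⟨ff y, hffq y⟩ : LocalizedModule y.1.asIdeal.primeCompl A)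
            = LocalizedModule.mk (bb q) ⟨ff q, hy⟩ := by
        intro q y hy
        obtain ⟨u, hu⟩ := (IsLocalization.eq_iff_exists y.1.asIdeal.primeCompl
          (Localization.AtPrime y.1.asIdeal)).mp (hcons y q)
        rw [LocalizedModule.mk_eq]
        refine ⟨u, ?_⟩
        simp only [Submonoid.smul_def, smul_eq_mul]
        linear_combination hu
      refine ⟨⟨fun q : ↥U => (LocalizedModule.mk (bb q) ⟨ff q, hffq q⟩ :
          LocalizedModule q.1.asIdeal.primeCompl A), ?_⟩, ?_⟩
      · intro q
        refine ⟨U ⊓ PrimeSpectrum.basicOpen (ff q), ⟨q.2, hffq q⟩,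
          homOfLE inf_le_left, bb q, ff q, ?_⟩
        rintro ⟨y, hyU, hyb⟩
        exact ⟨hyb, hloc q ⟨y, hyU⟩ hyb⟩
      · funext p
        refine (congrArg (c p) (gabriel_mk' A U p.1 p.2.2 _ (bb ⟨p.1, p.2.2⟩)
          (ff ⟨p.1, p.2.2⟩) (hffq ⟨p.1, p.2.2⟩) U p.2.2 le_rfl ?hL)).trans ?_
        case hL => exact fun y hy => hloc ⟨p.1, p.2.2⟩ y hy
        show c p (IsLocalization.mk' (Localization.AtPrime p.1.asIdeal) (bb ⟨p.1, p.2.2⟩)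
          (⟨ff ⟨p.1, p.2.2⟩, hffq ⟨p.1, p.2.2⟩⟩ : p.1.asIdeal.primeCompl)) = x p
        have humap : IsUnit (algebraMap A (AdicCompletion p.1.asIdeal A) (ff ⟨p.1, p.2.2⟩)) := by
          have h1 : IsUnit (algebraMap A (Localization.AtPrime p.1.asIdeal) (ff ⟨p.1, p.2.2⟩)) :=
            IsLocalization.map_units (Localization.AtPrime p.1.asIdeal)
              (⟨ff ⟨p.1, p.2.2⟩, hffq ⟨p.1, p.2.2⟩⟩ : p.1.asIdeal.primeCompl)
          have h2 := h1.map (c p)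
          rwa [← RingHom.comp_apply, hc p] at h2
        apply humap.mul_left_cancel
        have h1 : algebraMap A (AdicCompletion p.1.asIdeal A) (ff ⟨p.1, p.2.2⟩)
            = c p (algebraMap A (Localization.AtPrime p.1.asIdeal) (ff ⟨p.1, p.2.2⟩)) := by
          rw [← hc p]; rfl
        have hspec := IsLocalization.mk'_spec (Localization.AtPrime p.1.asIdeal) (bb ⟨p.1, p.2.2⟩)
          (⟨ff ⟨p.1, p.2.2⟩, hffq ⟨p.1, p.2.2⟩⟩ : p.1.asIdeal.primeCompl)
        calc algebraMap A (AdicCompletion p.1.asIdeal A) (ff ⟨p.1, p.2.2⟩)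
            * c p (IsLocalization.mk' (Localization.AtPrime p.1.asIdeal) (bb ⟨p.1, p.2.2⟩)
              (⟨ff ⟨p.1, p.2.2⟩, hffq ⟨p.1, p.2.2⟩⟩ : p.1.asIdeal.primeCompl))
            = c p (IsLocalization.mk' (Localization.AtPrime p.1.asIdeal) (bb ⟨p.1, p.2.2⟩)
                (⟨ff ⟨p.1, p.2.2⟩, hffq ⟨p.1, p.2.2⟩⟩ : p.1.asIdeal.primeCompl)
                * algebraMap A (Localization.AtPrime p.1.asIdeal) (ff ⟨p.1, p.2.2⟩)) := by
              rw [h1, map_mul]; ring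
          _ = c p (algebraMap A (Localization.AtPrime p.1.asIdeal) (bb ⟨p.1, p.2.2⟩)) := by
              rw [hspec]
          _ = algebraMap A (AdicCompletion p.1.asIdeal A) (bb ⟨p.1, p.2.2⟩) := by
              rw [← RingHom.comp_apply, hc p]
          _ = algebraMap A (AdicCompletion p.1.asIdeal A) (ff ⟨p.1, p.2.2⟩) * x p :=
              hbb ⟨p.1, p.2.2⟩ p
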